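/- arXiv:1001.0150 — 4 statements merged into one kernel-verified Lean document; each statement's English description precedes it below -/
import Mathlib

section
/- The metric space (R^n, D) with D(x,y) = max_i |x_i-y_i|^{α_1/α_i}, equipped with Lebesgue measure on R^n, is Ahlfors Q-regular with Q = Σ_{i=1}^r n_i α_i/α_1. -/
open MeasureTheory ENNReal

lemma ball_vol_aux (m : ℕ) (x : EuclideanSpace ℝ (Fin m)) {ρ : ℝ} (hρ : 0 < ρ) :
    volume (Metric.ball x ρ) =
      ENNReal.ofReal (ρ ^ m) * volume (Metric.ball (0 : EuclideanSpace ℝ (Fin m)) 1) := by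
  rcases Nat.eq_zero_or_pos m with rfl | hm
  · have h1 : Metric.ball x ρ = Set.univ :=
      Set.eq_univ_of_forall fun y => by
        simp [Metric.mem_ball, Subsingleton.elim y x, hρ]
    have h2 : Metric.ball (0 : EuclideanSpace ℝ (Fin 0)) 1 = Set.univ :=
      Set.eq_univ_of_forall fun y => by
        simp [Metric.mem_ball, Subsingleton.elim y (0 : EuclideanSpace ℝ (Fin 0))]
    simp [h1, h2]
  · have : Nontrivial (EuclideanSpace ℝ (Fin m)) := by
      refine ⟨EuclideanSpace.single ⟨0, hm⟩ 1, 0, ?_⟩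
      intro h
      have := congrArg (fun v : EuclideanSpace ℝ (Fin m) => v ⟨0, hm⟩) h
      simp [EuclideanSpace.single] at this
    rw [Measure.addHaar_ball volume x hρ.le, finrank_euclideanSpace_fin]

/-- `(R^n, D)` with `D(x,y) = max_i |x_i - y_i|^(α₁/α_i)` is Ahlfors `Q`-regular. -/
theorem stmt_6 (r : ℕ) (hr : 0 < r) (n : Fin r → ℕ) (α : Fin r → ℝ)
    (hα0 : 0 < α ⟨0, hr⟩) (hmono : Monotone α) :
    let D : (∀ i, EuclideanSpace ℝ (Fin (n i))) →
        (∀ i, EuclideanSpace ℝ (Fin (n i))) → ℝ :=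
      fun x y => Finset.univ.sup' ⟨⟨0, hr⟩, Finset.mem_univ _⟩
        (fun i => ‖x i - y i‖ ^ (α ⟨0, hr⟩ / α i))
    let Q : ℝ := ∑ i, (n i : ℝ) * α i / α ⟨0, hr⟩
    ∃ C : ℝ, 1 ≤ C ∧ ∀ (x : ∀ i, EuclideanSpace ℝ (Fin (n i))) (s : ℝ), 0 < s →
      ENNReal.ofReal (C⁻¹ * s ^ Q) ≤ volume {y | D x y < s} ∧
      volume {y | D x y < s} ≤ ENNReal.ofReal (C * s ^ Q) := by
  intro D Q
  set i0 : Fin r := ⟨0, hr⟩ with hi0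
  have hαpos : ∀ i, 0 < α i := fun i =>
    lt_of_lt_of_le hα0 (hmono (show i0 ≤ i from Nat.zero_le i.1))
  -- the constant: product of unit-ball volumes
  set c : Fin r → ℝ≥0∞ := fun i => volume (Metric.ball (0 : EuclideanSpace ℝ (Fin (n i))) 1)
    with hc
  have hcpos : ∀ i, 0 < c i := fun i => Metric.measure_ball_pos _ _ one_pos
  have hcfin : ∀ i, c i ≠ ⊤ := fun i => measure_ball_lt_top.ne
  set K : ℝ≥0∞ := ∏ i, c i with hK
  have hKfin : K ≠ ⊤ := by
    refine (ENNReal.prod_lt_top fun i _ => (hcfin i).lt_top).ne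
  have hKpos : 0 < K := by
    rw [hK, pos_iff_ne_zero]
    exact Finset.prod_ne_zero_iff.mpr fun i _ => (hcpos i).ne'
  set k : ℝ := K.toReal with hk
  have hkpos : 0 < k := ENNReal.toReal_pos hKpos.ne' hKfin
  have hKk : K = ENNReal.ofReal k := (ENNReal.ofReal_toReal hKfin).symm
  refine ⟨max k k⁻¹, ?_, ?_⟩
  · rcases le_total 1 k with h | h
    · exact le_max_of_le_left h
    · exact le_max_of_le_right (one_le_inv_iff₀.mpr ⟨hkpos, h⟩)
  intro x s hs
  -- the set is a product of balls
  have hset : {y | D x y < s} =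
      Set.pi Set.univ (fun i => Metric.ball (x i) (s ^ (α i / α i0))) := by
    ext y
    simp only [Set.mem_setOf_eq, D, Finset.sup'_lt_iff, Finset.mem_univ, true_imp_iff,
      Set.mem_pi, Set.mem_univ, Metric.mem_ball]
    refine (Finset.sup'_lt_iff ..).trans ?_
    simp only [Finset.mem_univ, true_imp_iff]
    refine forall_congr' fun i => ?_
    have h1 : dist (y i) (x i) = ‖x i - y i‖ := by
      rw [dist_eq_norm, norm_sub_rev]
    have h2 : (α i0 / α i)⁻¹ = α i / α i0 := by
      rw [inv_div]
    rw [h1, ← h2, ← Real.lt_rpow_inv_iff_of_pos (norm_nonneg _) hs.le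
      (div_pos hα0 (hαpos i))]
  have hvol : volume {y | D x y < s} = ENNReal.ofReal (s ^ Q) * K := by
    rw [hset, volume_pi_pi]
    have : ∀ i : Fin r, volume (Metric.ball (x i) (s ^ (α i / α i0)))
        = ENNReal.ofReal ((s ^ (α i / α i0)) ^ (n i)) * c i := fun i =>
      ball_vol_aux _ _ (Real.rpow_pos_of_pos hs _)
    simp_rw [this]
    rw [Finset.prod_mul_distrib, ← ENNReal.ofReal_prod_of_nonneg
      (fun i _ => pow_nonneg (Real.rpow_pos_of_pos hs _).le _), ← hK]
    congr 2
    have : ∀ i : Fin r, (s ^ (α i / α i0)) ^ (n i) = s ^ ((n i : ℝ) * α i / α i0) := by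
      intro i
      rw [← Real.rpow_natCast (s ^ (α i / α i0)) (n i), ← Real.rpow_mul hs.le]
      ring_nf
    simp_rw [this]
    rw [← Real.rpow_sum_of_pos hs]
  have hsQ : 0 < s ^ Q := Real.rpow_pos_of_pos hs _
  constructor
  · rw [hvol, hKk, ← ENNReal.ofReal_mul hsQ.le]
    refine ENNReal.ofReal_le_ofReal ?_
    rw [mul_comm (s ^ Q) k]
    refine mul_le_mul_of_nonneg_right ?_ hsQ.le
    rw [inv_le_comm₀ (lt_of_lt_of_le hkpos (le_max_left _ _)) hkpos]
    exact le_max_right _ _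
  · rw [hvol, hKk, ← ENNReal.ofReal_mul hsQ.le]
    refine ENNReal.ofReal_le_ofReal ?_
    rw [mul_comm (s ^ Q) k]
    exact mul_le_mul_of_nonneg_right (le_max_left _ _) hsQ.le
end

section
/- Let (X,d) be a metric space and p ∈ X, and suppose d_p is a metric on X \ {p} satisfying d(x,y)/(4 d(x,p) d(y,p)) ≤ d_p(x,y) ≤ d(x,y)/(d(x,p) d(y,p)) for all x,y ≠ p. If f: (X,d) → (Y,d) is an η̃-quasimöbius embedding, then f: (X \ {p}, d_p) → (Y \ {f(p)}, d_{f(p)}) is η'-quasisymmetric with η'(t) = 4·η̃(4t), where d_{f(p)} is a metric on Y \ {f(p)} satisfying the analogous inequalities. -/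
open NNReal

/-- `f` is an `η`-quasimöbius embedding: for four distinct points, the image
cross ratio is controlled by `η` of the cross ratio. -/
def IsQM {X Y : Type*} [MetricSpace X] [MetricSpace Y]
    (η : ℝ≥0 → ℝ≥0) (f : X → Y) : Prop :=
  ∀ x₁ x₂ x₃ x₄ : X, x₁ ≠ x₂ → x₁ ≠ x₃ → x₁ ≠ x₄ → x₂ ≠ x₃ → x₂ ≠ x₄ → x₃ ≠ x₄ →
    nndist (f x₁) (f x₃) * nndist (f x₂) (f x₄) /
        (nndist (f x₁) (f x₄) * nndist (f x₂) (f x₃)) ≤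
      η (nndist x₁ x₃ * nndist x₂ x₄ / (nndist x₁ x₄ * nndist x₂ x₃))

private lemma nndist_pos' {Z : Type*} [MetricSpace Z] {a b : Z} (h : a ≠ b) :
    (0:ℝ≥0) < nndist a b :=
  pos_iff_ne_zero.mpr (fun h0 => h (by simpa using h0))

/-- Metric inversion turns quasimöbius embeddings into quasisymmetric ones:
if `d_p` (resp. `d_{f(p)}`) is a metric inversion of `X` at `p` (resp. of `Y`
at `f(p)`), i.e. agrees with `d(x,y)/(d(x,p)d(y,p))` up to the factors `1/4`
and `1`, and `f` is `η̃`-quasimöbius, then `f : (X \ {p}, d_p) → (Y \ {f p},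
d_{f p})` is `η'`-quasisymmetric with `η'(t) = 4 η̃(4t)`. -/
theorem stmt_11 {X Y : Type*} [MetricSpace X] [MetricSpace Y]
    (η : ℝ≥0 ≃o ℝ≥0) (f : X → Y) (hinj : Function.Injective f)
    (hf : IsQM (⇑η) f)
    (p : X) (dp : X → X → ℝ≥0) (dq : Y → Y → ℝ≥0)
    (hdp : ∀ x y : X, x ≠ p → y ≠ p →
      nndist x y / (4 * nndist x p * nndist y p) ≤ dp x y ∧
      dp x y ≤ nndist x y / (nndist x p * nndist y p))
    (hdq : ∀ x y : Y, x ≠ f p → y ≠ f p →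
      nndist x y / (4 * nndist x (f p) * nndist y (f p)) ≤ dq x y ∧
      dq x y ≤ nndist x y / (nndist x (f p) * nndist y (f p))) :
    ∀ x y z : X, x ≠ p → y ≠ p → z ≠ p → x ≠ y → x ≠ z → y ≠ z →
      dq (f x) (f z) / dq (f y) (f z) ≤ 4 * η (4 * (dp x z / dp y z)) := by
  intro x y z hxp hyp hzp hxy hxz hyz
  have hfxp : f x ≠ f p := fun h => hxp (hinj h)
  have hfyp : f y ≠ f p := fun h => hyp (hinj h)
  have hfzp : f z ≠ f p := fun h => hzp (hinj h)
  have hfyz : f y ≠ f z := fun h => hyz (hinj h)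
  -- positivity
  have pxz : (0:ℝ≥0) < nndist x z := nndist_pos' hxz
  have pyz : (0:ℝ≥0) < nndist y z := nndist_pos' hyz
  have pxp : (0:ℝ≥0) < nndist x p := nndist_pos' hxp
  have pyp : (0:ℝ≥0) < nndist y p := nndist_pos' hyp
  have pzp : (0:ℝ≥0) < nndist z p := nndist_pos' hzp
  have pfxq : (0:ℝ≥0) < nndist (f x) (f p) := nndist_pos' hfxp
  have pfyq : (0:ℝ≥0) < nndist (f y) (f p) := nndist_pos' hfyp
  have pfzq : (0:ℝ≥0) < nndist (f z) (f p) := nndist_pos' hfzp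
  have pfyz : (0:ℝ≥0) < nndist (f y) (f z) := nndist_pos' hfyz
  obtain ⟨hq1, hq2⟩ := hdq (f x) (f z) hfxp hfzp
  obtain ⟨hq3, hq4⟩ := hdq (f y) (f z) hfyp hfzp
  obtain ⟨hp1, hp2⟩ := hdp x z hxp hzp
  obtain ⟨hp3, hp4⟩ := hdp y z hyp hzp
  have hden : (0:ℝ≥0) < nndist (f y) (f z) / (4 * nndist (f y) (f p) * nndist (f z) (f p)) :=
    div_pos pfyz (by positivity)
  have step1 : dq (f x) (f z) / dq (f y) (f z) ≤
      (nndist (f x) (f z) / (nndist (f x) (f p) * nndist (f z) (f p))) /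
      (nndist (f y) (f z) / (4 * nndist (f y) (f p) * nndist (f z) (f p))) := by
    gcongr
  have eq1 : (nndist (f x) (f z) / (nndist (f x) (f p) * nndist (f z) (f p))) /
      (nndist (f y) (f z) / (4 * nndist (f y) (f p) * nndist (f z) (f p))) =
      4 * (nndist (f x) (f z) * nndist (f y) (f p) /
        (nndist (f x) (f p) * nndist (f y) (f z))) := by
    field_simp
  have step2 : nndist (f x) (f z) * nndist (f y) (f p) /
      (nndist (f x) (f p) * nndist (f y) (f z)) ≤
      η (nndist x z * nndist y p / (nndist x p * nndist y z)) :=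
    hf x y z p hxy hxz hxp hyz hyp hzp
  have step3 : nndist x z * nndist y p / (nndist x p * nndist y z) ≤
      4 * (dp x z / dp y z) := by
    have hdpy : (0:ℝ≥0) < dp y z :=
      (div_pos pyz (by positivity)).trans_le hp3
    have h : (nndist x z / (4 * nndist x p * nndist z p)) /
        (nndist y z / (nndist y p * nndist z p)) ≤ dp x z / dp y z := by
      gcongr
    calc nndist x z * nndist y p / (nndist x p * nndist y z)
        = 4 * ((nndist x z / (4 * nndist x p * nndist z p)) /
          (nndist y z / (nndist y p * nndist z p))) := by
          field_simp
      _ ≤ 4 * (dp x z / dp y z) := by gcongr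
  calc dq (f x) (f z) / dq (f y) (f z)
      ≤ 4 * (nndist (f x) (f z) * nndist (f y) (f p) /
        (nndist (f x) (f p) * nndist (f y) (f z))) := by rw [← eq1]; exact step1
    _ ≤ 4 * η (nndist x z * nndist y p / (nndist x p * nndist y z)) := by gcongr
    _ ≤ 4 * η (4 * (dp x z / dp y z)) := by
        exact mul_le_mul_right (η.monotone step3) 4
end

section
/- Let p, q ∈ R^n ≅ ∂G_A \ {ξ₀} with D_e(p,q) = e^{t₀}, and let t₁ ≥ t₀ or t₂ ≥ t₀. Then |t₁ - t₂| ≤ d((p,t₁),(q,t₂)) ≤ |t₁ - t₂| + 1 in G_A. -/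
open MeasureTheory

/-- The length of a C¹ path in `G_A = R^n ⋊_A R` for the left invariant
Riemannian metric whose quadratic form at `(x,t)` is `diag(e^{-2tA}, 1)`. -/
noncomputable def pathLength (r : ℕ) (n : Fin r → ℕ) (α : Fin r → ℝ)
    (c : ℝ → (∀ i, EuclideanSpace ℝ (Fin (n i))) × ℝ)
    (v : ℝ → (∀ i, EuclideanSpace ℝ (Fin (n i))) × ℝ) : ℝ :=
  ∫ s in (0:ℝ)..1,
    Real.sqrt ((∑ i, Real.exp (-2 * (c s).2 * α i) * ‖(v s).1 i‖ ^ 2) +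
      ((v s).2) ^ 2)

/-- The Riemannian distance on `G_A`: infimum of lengths of C¹ paths. -/
noncomputable def gdist (r : ℕ) (n : Fin r → ℕ) (α : Fin r → ℝ)
    (x y : (∀ i, EuclideanSpace ℝ (Fin (n i))) × ℝ) : ℝ :=
  sInf {L : ℝ | ∃ c v, c 0 = x ∧ c 1 = y ∧
    (∀ s ∈ Set.Icc (0:ℝ) 1, HasDerivAt c (v s) s) ∧ Continuous v ∧
    L = pathLength r n α c v}

open intervalIntegral Set



noncomputable def psi (s : ℝ) : ℝ := 3*s^2 - 2*s^3
noncomputable def dpsi (s : ℝ) : ℝ := 6*s - 6*s^2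

lemma hasDerivAt_psi (s : ℝ) : HasDerivAt psi (dpsi s) s := by
  have h := (((hasDerivAt_id s).pow 2).const_mul 3).sub
    (((hasDerivAt_id s).pow 3).const_mul 2)
  have e1 : psi = ((fun y => 3 * (id ^ 2) y) - fun y => 2 * (id ^ 3) y) := by
    funext y; simp [psi]
  rw [e1]; refine h.congr_deriv ?_
  simp [dpsi]; ring

lemma continuous_psi : Continuous psi := by unfold psi; fun_prop

lemma psi_zero : psi 0 = 0 := by norm_num [psi]
lemma psi_one : psi 1 = 1 := by norm_num [psi]
lemma dpsi_zero : dpsi 0 = 0 := by norm_num [dpsi]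
lemma dpsi_one : dpsi 1 = 0 := by norm_num [dpsi]
lemma dpsi_nonneg {s : ℝ} (h0 : 0 ≤ s) (h1 : s ≤ 1) : 0 ≤ dpsi s := by
  unfold dpsi; nlinarith

section Construct
variable (r : ℕ) (n : Fin r → ℕ) (α : Fin r → ℝ)
  (p q : ∀ i, EuclideanSpace ℝ (Fin (n i))) (t₁ t₂ m : ℝ)

noncomputable def pA : ℝ → (∀ i, EuclideanSpace ℝ (Fin (n i))) × ℝ :=
  fun s => (p, t₁ + (m - t₁) * psi (3*s))
noncomputable def pB : ℝ → (∀ i, EuclideanSpace ℝ (Fin (n i))) × ℝ :=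
  fun s => (p + psi (3*s - 1) • (q - p), m)
noncomputable def pC : ℝ → (∀ i, EuclideanSpace ℝ (Fin (n i))) × ℝ :=
  fun s => (q, m + (t₂ - m) * psi (3*s - 2))
noncomputable def vA : ℝ → (∀ i, EuclideanSpace ℝ (Fin (n i))) × ℝ :=
  fun s => (0, (m - t₁) * (dpsi (3*s) * 3))
noncomputable def vB : ℝ → (∀ i, EuclideanSpace ℝ (Fin (n i))) × ℝ :=
  fun s => ((dpsi (3*s - 1) * 3) • (q - p), 0)
noncomputable def vC : ℝ → (∀ i, EuclideanSpace ℝ (Fin (n i))) × ℝ :=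
  fun s => (0, (t₂ - m) * (dpsi (3*s - 2) * 3))

noncomputable def pc : ℝ → (∀ i, EuclideanSpace ℝ (Fin (n i))) × ℝ :=
  fun s => if s ≤ 1/3 then pA r n p t₁ m s else
    if s ≤ 2/3 then pB r n p q m s else pC r n q t₂ m s
noncomputable def pv : ℝ → (∀ i, EuclideanSpace ℝ (Fin (n i))) × ℝ :=
  fun s => if s ≤ 1/3 then vA r n t₁ m s else
    if s ≤ 2/3 then vB r n p q s else vC r n t₂ m s

lemma hasDerivAt_pA (s : ℝ) : HasDerivAt (pA r n p t₁ m) (vA r n t₁ m s) s := by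
  have h3 : HasDerivAt (fun u : ℝ => 3 * u) 3 s := by
    simpa using (hasDerivAt_id s).const_mul 3
  have h := (((hasDerivAt_psi (3*s)).comp s h3).const_mul (m - t₁)).const_add t₁
  exact (hasDerivAt_const s p).prodMk h

lemma hasDerivAt_affine (a : ℝ) (s : ℝ) :
    HasDerivAt (fun u : ℝ => psi (3*u - a)) (dpsi (3*s - a) * 3) s := by
  have h3 : HasDerivAt (fun u : ℝ => 3 * u - a) 3 s := by
    simpa using ((hasDerivAt_id s).const_mul 3).sub_const a
  exact (hasDerivAt_psi (3*s - a)).comp s h3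

lemma hasDerivAt_pB (s : ℝ) : HasDerivAt (pB r n p q m) (vB r n p q s) s := by
  have h := ((hasDerivAt_affine 1 s).smul_const (q - p)).const_add p
  exact h.prodMk (hasDerivAt_const s m)

lemma hasDerivAt_pC (s : ℝ) : HasDerivAt (pC r n q t₂ m) (vC r n t₂ m s) s := by
  have h := (((hasDerivAt_affine 2 s)).const_mul (t₂ - m)).const_add m
  exact (hasDerivAt_const s q).prodMk (by simpa [mul_comm] using h)

lemma pAB : pA r n p t₁ m (1/3) = pB r n p q m (1/3) := by
  norm_num [pA, pB, psi_one, psi_zero]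

lemma pBC : pB r n p q m (2/3) = pC r n q t₂ m (2/3) := by
  norm_num [pB, pC, psi_one, psi_zero]

lemma vAB : vA r n t₁ m (1/3) = ((0:∀ i, EuclideanSpace ℝ (Fin (n i))), (0:ℝ)) := by
  norm_num [vA, dpsi_one]
lemma vBA : vB r n p q (1/3) = ((0:∀ i, EuclideanSpace ℝ (Fin (n i))), (0:ℝ)) := by
  norm_num [vB, dpsi_zero]
lemma vBC : vB r n p q (2/3) = ((0:∀ i, EuclideanSpace ℝ (Fin (n i))), (0:ℝ)) := by
  norm_num [vB, dpsi_one]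
lemma vCB : vC r n t₂ m (2/3) = ((0:∀ i, EuclideanSpace ℝ (Fin (n i))), (0:ℝ)) := by
  norm_num [vC, dpsi_zero]

lemma pc_eqOn_A : Set.EqOn (pc r n p q t₁ t₂ m) (pA r n p t₁ m) (Set.Iic (1/3)) :=
  fun t ht => by
    have h : t ≤ 1/3 := ht
    simp only [pc, if_pos h]

lemma pc_eqOn_B : Set.EqOn (pc r n p q t₁ t₂ m) (pB r n p q m)
    (Set.Icc (1/3) (2/3)) := by
  intro t ht
  rcases eq_or_lt_of_le ht.1 with h' | h'
  · subst h'; simp only [pc, if_pos le_rfl]; exact pAB r n p q t₁ m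
  · simp only [pc, if_neg (not_le.2 h'), if_pos ht.2]

lemma pc_eqOn_C : Set.EqOn (pc r n p q t₁ t₂ m) (pC r n q t₂ m)
    (Set.Ici (2/3)) := by
  intro t ht
  rcases eq_or_lt_of_le (Set.mem_Ici.mp ht : (2/3:ℝ) ≤ t) with h' | h'
  · subst h'
    simp only [pc, if_neg (by norm_num : ¬ (2/3:ℝ) ≤ 1/3), if_pos le_rfl]
    exact pBC r n p q t₂ m
  · simp only [pc, if_neg (by linarith : ¬ t ≤ 1/3), if_neg (not_le.2 h')]

lemma pc_continuous : Continuous (pc r n p q t₁ t₂ m) := by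
  have hA : Continuous (pA r n p t₁ m) := by unfold pA psi; fun_prop
  have hB : Continuous (pB r n p q m) := by unfold pB psi; fun_prop
  have hC : Continuous (pC r n q t₂ m) := by unfold pC psi; fun_prop
  have hBC : Continuous (fun s => if s ≤ (2/3:ℝ) then pB r n p q m s
      else pC r n q t₂ m s) := by
    apply Continuous.if_le hB hC continuous_id continuous_const
    intro x hx; subst hx; exact pBC r n p q t₂ m
  apply Continuous.if_le hA hBC continuous_id continuous_const
  intro x hx; subst hx
  simp only [if_pos (by norm_num : (1/3:ℝ) ≤ 2/3)]
  exact pAB r n p q t₁ m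

lemma pv_continuous : Continuous (pv r n p q t₁ t₂ m) := by
  have hA : Continuous (vA r n t₁ m) := by unfold vA dpsi; fun_prop
  have hB : Continuous (vB r n p q) := by unfold vB dpsi; fun_prop
  have hC : Continuous (vC r n t₂ m) := by unfold vC dpsi; fun_prop
  have hBC : Continuous (fun s => if s ≤ (2/3:ℝ) then vB r n p q s
      else vC r n t₂ m s) := by
    apply Continuous.if_le hB hC continuous_id continuous_const
    intro x hx; subst hx
    rw [vBC r n p q, vCB r n t₂ m]
  apply Continuous.if_le hA hBC continuous_id continuous_const
  intro x hx; subst hx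
  simp only [if_pos (by norm_num : (1/3:ℝ) ≤ 2/3)]
  rw [vAB r n t₁ m, vBA r n p q]

lemma pc_hasDerivAt (s : ℝ) :
    HasDerivAt (pc r n p q t₁ t₂ m) (pv r n p q t₁ t₂ m s) s := by
  rcases lt_trichotomy s (1/3) with h | h | h
  · have hev : pc r n p q t₁ t₂ m =ᶠ[nhds s] pA r n p t₁ m := by
      filter_upwards [Iio_mem_nhds h] with t ht
      exact pc_eqOn_A r n p q t₁ t₂ m (Set.mem_Iic.mpr ht.le)
    have : pv r n p q t₁ t₂ m s = vA r n t₁ m s := by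
      simp only [pv, if_pos h.le]
    rw [this]
    exact (hasDerivAt_pA r n p t₁ m s).congr_of_eventuallyEq hev
  · subst h
    have d1 : HasDerivWithinAt (pc r n p q t₁ t₂ m)
        ((0:∀ i, EuclideanSpace ℝ (Fin (n i))), (0:ℝ)) (Set.Iic (1/3)) (1/3) := by
      have hh := (hasDerivAt_pA r n p t₁ m (1/3)).hasDerivWithinAt (s := Set.Iic (1/3))
      rw [vAB] at hh
      exact hh.congr (pc_eqOn_A r n p q t₁ t₂ m)
        (pc_eqOn_A r n p q t₁ t₂ m (by norm_num))
    have d2 : HasDerivWithinAt (pc r n p q t₁ t₂ m)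
        ((0:∀ i, EuclideanSpace ℝ (Fin (n i))), (0:ℝ))
        (Set.Icc (1/3) (2/3)) (1/3) := by
      have hh := (hasDerivAt_pB r n p q m (1/3)).hasDerivWithinAt
        (s := Set.Icc (1/3) (2/3))
      rw [vBA] at hh
      exact hh.congr (pc_eqOn_B r n p q t₁ t₂ m)
        (pc_eqOn_B r n p q t₁ t₂ m (by norm_num))
    have du := d1.union d2
    rw [Set.Iic_union_Icc_eq_Iic (by norm_num : (1/3:ℝ) ≤ 2/3)] at du
    have : pv r n p q t₁ t₂ m (1/3) =
        ((0:∀ i, EuclideanSpace ℝ (Fin (n i))), (0:ℝ)) := by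
      simp only [pv, if_pos le_rfl]; exact vAB r n t₁ m
    rw [this]
    exact du.hasDerivAt (Iic_mem_nhds (by norm_num))
  · rcases lt_trichotomy s (2/3) with h2 | h2 | h2
    · have hev : pc r n p q t₁ t₂ m =ᶠ[nhds s] pB r n p q m := by
        filter_upwards [Ioo_mem_nhds h h2] with t ht
        exact pc_eqOn_B r n p q t₁ t₂ m ⟨ht.1.le, ht.2.le⟩
      have : pv r n p q t₁ t₂ m s = vB r n p q s := by
        simp only [pv, if_neg (not_le.2 h), if_pos h2.le]
      rw [this]
      exact (hasDerivAt_pB r n p q m s).congr_of_eventuallyEq hev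
    · subst h2
      have d1 : HasDerivWithinAt (pc r n p q t₁ t₂ m)
          ((0:∀ i, EuclideanSpace ℝ (Fin (n i))), (0:ℝ))
          (Set.Icc (1/3) (2/3)) (2/3) := by
        have hh := (hasDerivAt_pB r n p q m (2/3)).hasDerivWithinAt
          (s := Set.Icc (1/3) (2/3))
        rw [vBC] at hh
        exact hh.congr (pc_eqOn_B r n p q t₁ t₂ m)
          (pc_eqOn_B r n p q t₁ t₂ m (by norm_num))
      have d2 : HasDerivWithinAt (pc r n p q t₁ t₂ m)
          ((0:∀ i, EuclideanSpace ℝ (Fin (n i))), (0:ℝ)) (Set.Ici (2/3)) (2/3) := by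
        have hh := (hasDerivAt_pC r n q t₂ m (2/3)).hasDerivWithinAt
          (s := Set.Ici (2/3))
        rw [vCB] at hh
        exact hh.congr (pc_eqOn_C r n p q t₁ t₂ m)
          (pc_eqOn_C r n p q t₁ t₂ m (by norm_num))
      have du := d1.union d2
      rw [Set.Icc_union_Ici_eq_Ici (by norm_num : (1/3:ℝ) ≤ 2/3)] at du
      have : pv r n p q t₁ t₂ m (2/3) =
          ((0:∀ i, EuclideanSpace ℝ (Fin (n i))), (0:ℝ)) := by
        simp only [pv, if_neg (by norm_num : ¬ (2/3:ℝ) ≤ 1/3), if_pos le_rfl]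
        exact vBC r n p q
      rw [this]
      exact du.hasDerivAt (Ici_mem_nhds (by norm_num))
    · have hev : pc r n p q t₁ t₂ m =ᶠ[nhds s] pC r n q t₂ m := by
        filter_upwards [Ioi_mem_nhds h2] with t ht
        exact pc_eqOn_C r n p q t₁ t₂ m (Set.mem_Ici.mpr ht.le)
      have : pv r n p q t₁ t₂ m s = vC r n t₂ m s := by
        simp only [pv, if_neg (by linarith : ¬ s ≤ 1/3), if_neg (not_le.2 h2)]
      rw [this]
      exact (hasDerivAt_pC r n q t₂ m s).congr_of_eventuallyEq hev

end Construct
lemma pathLength_nonneg (r : ℕ) (n : Fin r → ℕ) (α : Fin r → ℝ) c v :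
    0 ≤ pathLength r n α c v := by
  apply intervalIntegral.integral_nonneg (by norm_num)
  intro s _; positivity

lemma integrand_contOn (r : ℕ) (n : Fin r → ℕ) (α : Fin r → ℝ)
    (c v : ℝ → (∀ i, EuclideanSpace ℝ (Fin (n i))) × ℝ) (S : Set ℝ)
    (hccont : ContinuousOn c S) (hv : Continuous v) :
    ContinuousOn (fun s =>
      Real.sqrt ((∑ i, Real.exp (-2 * (c s).2 * α i) * ‖(v s).1 i‖ ^ 2) +
        ((v s).2) ^ 2)) S := by
  apply ContinuousOn.sqrt
  apply ContinuousOn.add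
  · apply continuousOn_finset_sum
    intro i _
    have h1 : ContinuousOn (fun s => Real.exp (-2 * (c s).2 * α i)) S :=
      Real.continuous_exp.comp_continuousOn
        ((continuousOn_const.mul (continuous_snd.comp_continuousOn hccont)).mul
          continuousOn_const)
    have h2 : Continuous (fun s => ‖(v s).1 i‖ ^ 2) :=
      (((continuous_apply i).comp (continuous_fst.comp hv)).norm).pow 2
    exact h1.mul h2.continuousOn
  · exact (((continuous_snd.comp hv).pow 2)).continuousOn

lemma pathLength_ge (r : ℕ) (n : Fin r → ℕ) (α : Fin r → ℝ)
    (c v : ℝ → (∀ i, EuclideanSpace ℝ (Fin (n i))) × ℝ)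
    (hc : ∀ s ∈ Set.Icc (0:ℝ) 1, HasDerivAt c (v s) s) (hv : Continuous v) :
    |(c 1).2 - (c 0).2| ≤ pathLength r n α c v := by
  have hccont : ContinuousOn c (Set.Icc 0 1) := fun s hs =>
    (hc s hs).continuousAt.continuousWithinAt
  have hsnd : ∀ s ∈ Set.uIcc (0:ℝ) 1, HasDerivAt (fun u => (c u).2) ((v s).2) s := by
    intro s hs
    rw [Set.uIcc_of_le (by norm_num)] at hs
    exact ((ContinuousLinearMap.snd ℝ ((∀ i, EuclideanSpace ℝ (Fin (n i)))) ℝ).hasFDerivAt).comp_hasDerivAt s (hc s hs)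
  have hvint : IntervalIntegrable (fun s => |(v s).2|) MeasureTheory.volume 0 1 :=
    ((continuous_snd.comp hv).abs).intervalIntegrable 0 1
  have hgcont := integrand_contOn r n α c v (Set.Icc 0 1) hccont hv
  have hgint : IntervalIntegrable (fun s =>
      Real.sqrt ((∑ i, Real.exp (-2 * (c s).2 * α i) * ‖(v s).1 i‖ ^ 2) +
        ((v s).2) ^ 2)) MeasureTheory.volume 0 1 := by
    apply ContinuousOn.intervalIntegrable
    rwa [Set.uIcc_of_le (by norm_num)]
  have key : ∫ s in (0:ℝ)..1, (v s).2 = (c 1).2 - (c 0).2 :=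
    intervalIntegral.integral_eq_sub_of_hasDerivAt hsnd
      ((continuous_snd.comp hv).intervalIntegrable 0 1)
  calc |(c 1).2 - (c 0).2| = |∫ s in (0:ℝ)..1, (v s).2| := by rw [key]
    _ ≤ ∫ s in (0:ℝ)..1, |(v s).2| :=
        intervalIntegral.abs_integral_le_integral_abs (by norm_num)
    _ ≤ pathLength r n α c v := by
        apply intervalIntegral.integral_mono_on (by norm_num) hvint hgint
        intro s hs
        have h0 : 0 ≤ ∑ i, Real.exp (-2 * (c s).2 * α i) * ‖(v s).1 i‖ ^ 2 := by
          positivity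
        calc |(v s).2| = Real.sqrt (((v s).2) ^ 2) := (Real.sqrt_sq_eq_abs _).symm
          _ ≤ _ := Real.sqrt_le_sqrt (by linarith)
section LengthEval
variable (r : ℕ) (n : Fin r → ℕ) (α : Fin r → ℝ)
  (p q : ∀ i, EuclideanSpace ℝ (Fin (n i))) (t₁ t₂ m : ℝ)

lemma pc_zero : pc r n p q t₁ t₂ m 0 = (p, t₁) := by
  have h0 : (0:ℝ) ≤ 1/3 := by norm_num
  simp only [pc, if_pos h0, pA]
  norm_num [psi_zero]

lemma pc_one : pc r n p q t₁ t₂ m 1 = (q, t₂) := by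
  simp only [pc, if_neg (by norm_num : ¬ (1:ℝ) ≤ 1/3),
    if_neg (by norm_num : ¬ (1:ℝ) ≤ 2/3), pC]
  norm_num [psi_one]

lemma pathLength_pc (hm1 : t₁ ≤ m) (hm2 : t₂ ≤ m) :
    pathLength r n α (pc r n p q t₁ t₂ m) (pv r n p q t₁ t₂ m) =
      (m - t₁) + Real.sqrt (∑ i, Real.exp (-2*m*α i) * ‖p i - q i‖^2)
        + (m - t₂) := by
  set H := Real.sqrt (∑ i, Real.exp (-2*m*α i) * ‖p i - q i‖^2) with hHdef
  have hH0 : 0 ≤ H := Real.sqrt_nonneg _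
  set g : ℝ → ℝ := fun s =>
    Real.sqrt ((∑ i, Real.exp (-2 * (pc r n p q t₁ t₂ m s).2 * α i) *
      ‖(pv r n p q t₁ t₂ m s).1 i‖ ^ 2) + ((pv r n p q t₁ t₂ m s).2) ^ 2)
    with hgdef
  have hgc : ContinuousOn g Set.univ :=
    integrand_contOn r n α _ _ _ (pc_continuous r n p q t₁ t₂ m).continuousOn
      (pv_continuous r n p q t₁ t₂ m)
  have hgint : ∀ a b : ℝ, IntervalIntegrable g MeasureTheory.volume a b :=
    fun a b => (hgc.mono (Set.subset_univ _)).intervalIntegrable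
  -- first piece
  have eval1 : ∫ s in (0:ℝ)..(1/3), g s = m - t₁ := by
    have hF : ∀ x ∈ Set.uIcc (0:ℝ) (1/3),
        HasDerivAt (fun u => t₁ + (m - t₁) * psi (3*u)) (g x) x := by
      intro x hx
      rw [Set.uIcc_of_le (by norm_num)] at hx
      have h3 : HasDerivAt (fun u : ℝ => 3*u) 3 x := by
        simpa using (hasDerivAt_id x).const_mul 3
      have hd := (((hasDerivAt_psi (3*x)).comp x h3).const_mul (m - t₁)).const_add t₁
      have hnn : 0 ≤ (m - t₁) * (dpsi (3*x) * 3) :=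
        mul_nonneg (by linarith)
          (mul_nonneg (dpsi_nonneg (by linarith [hx.1]) (by linarith [hx.2]))
            (by norm_num))
      have hgx : g x = (m - t₁) * (dpsi (3*x) * 3) := by
        rw [hgdef]
        simp only [pc, pv, if_pos hx.2, vA, pA, Pi.zero_apply, norm_zero]
        rw [show ((0:ℝ) ^ 2) = 0 by norm_num]
        simp only [mul_zero, Finset.sum_const_zero, zero_add]
        exact Real.sqrt_sq hnn
      rw [hgx]; exact hd
    rw [intervalIntegral.integral_eq_sub_of_hasDerivAt hF (hgint 0 (1/3))]
    norm_num [psi_one, psi_zero]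
  -- second piece
  have eval2 : ∫ s in (1/3:ℝ)..(2/3), g s = H := by
    have hF : ∀ x ∈ Set.uIcc (1/3:ℝ) (2/3),
        HasDerivAt (fun u => H * psi (3*u - 1)) (g x) x := by
      intro x hx
      rw [Set.uIcc_of_le (by norm_num)] at hx
      have hd := (hasDerivAt_affine 1 x).const_mul H
      have hgx : g x = H * (dpsi (3*x - 1) * 3) := by
        rcases eq_or_lt_of_le hx.1 with he | hlt
        · rw [hgdef, ← he]
          have h1 : pv r n p q t₁ t₂ m (1/3) =
              ((0:∀ i, EuclideanSpace ℝ (Fin (n i))), (0:ℝ)) := by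
            simp only [pv, if_pos le_rfl]; exact vAB r n t₁ m
          beta_reduce
          rw [h1]
          simp only [Pi.zero_apply, norm_zero]
          rw [show ((0:ℝ) ^ 2) = 0 by norm_num]
          simp only [mul_zero, Finset.sum_const_zero, zero_add]
          rw [show (3*(1/3:ℝ) - 1) = 0 by norm_num, dpsi_zero]
          simp [Real.sqrt_zero]
        · have hknn : 0 ≤ dpsi (3*x - 1) * 3 :=
            mul_nonneg (dpsi_nonneg (by linarith) (by linarith [hx.2]))
              (by norm_num)
          rw [hgdef]
          simp only [pc, pv, if_neg (not_le.2 hlt), if_pos hx.2, vB, pB]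
          rw [show ((0:ℝ) ^ 2) = 0 by norm_num]
          have hterm : ∀ i, Real.exp (-2 * m * α i) *
              ‖((dpsi (3*x - 1) * 3) • (q - p)) i‖ ^ 2 =
              (dpsi (3*x - 1) * 3)^2 *
                (Real.exp (-2*m*α i) * ‖p i - q i‖^2) := by
            intro i
            have hi : ((dpsi (3*x - 1) * 3) • (q - p)) i =
                (dpsi (3*x - 1) * 3) • (q i - p i) := rfl
            rw [hi, norm_smul, Real.norm_eq_abs, mul_pow, sq_abs,
              norm_sub_rev]
            ring
          rw [Finset.sum_congr rfl (fun i _ => hterm i), ← Finset.mul_sum,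
            add_zero, Real.sqrt_mul (sq_nonneg _), Real.sqrt_sq hknn,
            ← hHdef, mul_comm]
      rw [hgx]; exact hd
    rw [intervalIntegral.integral_eq_sub_of_hasDerivAt hF (hgint (1/3) (2/3))]
    norm_num [psi_one, psi_zero]
  -- third piece
  have eval3 : ∫ s in (2/3:ℝ)..1, g s = m - t₂ := by
    have hF : ∀ x ∈ Set.uIcc (2/3:ℝ) 1,
        HasDerivAt (fun u => (m - t₂) * psi (3*u - 2)) (g x) x := by
      intro x hx
      rw [Set.uIcc_of_le (by norm_num)] at hx
      have hd := (hasDerivAt_affine 2 x).const_mul (m - t₂)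
      have hgx : g x = (m - t₂) * (dpsi (3*x - 2) * 3) := by
        rcases eq_or_lt_of_le hx.1 with he | hlt
        · rw [hgdef, ← he]
          have h1 : pv r n p q t₁ t₂ m (2/3) =
              ((0:∀ i, EuclideanSpace ℝ (Fin (n i))), (0:ℝ)) := by
            simp only [pv, if_neg (by norm_num : ¬ (2/3:ℝ) ≤ 1/3),
              if_pos le_rfl]
            exact vBC r n p q
          beta_reduce
          rw [h1]
          simp only [Pi.zero_apply, norm_zero]
          rw [show ((0:ℝ) ^ 2) = 0 by norm_num]
          simp only [mul_zero, Finset.sum_const_zero, zero_add]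
          rw [show (3*(2/3:ℝ) - 2) = 0 by norm_num, dpsi_zero]
          simp [Real.sqrt_zero]
        · rw [hgdef]
          simp only [pc, pv, if_neg (by linarith : ¬ x ≤ 1/3),
            if_neg (not_le.2 hlt), vC, pC, Pi.zero_apply, norm_zero]
          rw [show ((0:ℝ) ^ 2) = 0 by norm_num]
          simp only [mul_zero, Finset.sum_const_zero, zero_add]
          rw [Real.sqrt_sq_eq_abs, abs_of_nonpos
            (mul_nonpos_of_nonpos_of_nonneg (by linarith)
              (mul_nonneg (dpsi_nonneg (by linarith) (by linarith [hx.2]))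
                (by norm_num)))]
          ring
      rw [hgx]; exact hd
    rw [intervalIntegral.integral_eq_sub_of_hasDerivAt hF (hgint (2/3) 1)]
    norm_num [psi_one, psi_zero]
  have split2 : (∫ s in (1/3:ℝ)..(2/3), g s) + ∫ s in (2/3:ℝ)..1, g s =
      ∫ s in (1/3:ℝ)..1, g s :=
    intervalIntegral.integral_add_adjacent_intervals (hgint _ _) (hgint _ _)
  have split1 : (∫ s in (0:ℝ)..(1/3), g s) + ∫ s in (1/3:ℝ)..1, g s =
      ∫ s in (0:ℝ)..1, g s :=
    intervalIntegral.integral_add_adjacent_intervals (hgint _ _) (hgint _ _)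
  have : pathLength r n α (pc r n p q t₁ t₂ m) (pv r n p q t₁ t₂ m) =
      ∫ s in (0:ℝ)..1, g s := rfl
  rw [this, ← split1, ← split2, eval1, eval2, eval3]
  ring

end LengthEval

/-- Let `p ≠ q ∈ R^n ≅ ∂G_A \ {ξ₀}` with `D_e(p,q) = e^{t₀}`, i.e.
`|e^{-t₀ A}(p-q)| = 1`. If `t₁ ≥ t₀` or `t₂ ≥ t₀`, then
`|t₁ - t₂| ≤ d((p,t₁),(q,t₂)) ≤ |t₁ - t₂| + 1` in `G_A`. -/
theorem stmt_16 (r : ℕ) (hr : 0 < r) (n : Fin r → ℕ) (α : Fin r → ℝ)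
    (hα : ∀ i, 0 < α i)
    (p q : ∀ i, EuclideanSpace ℝ (Fin (n i))) (hpq : p ≠ q)
    (t₀ : ℝ) (ht₀ : (∑ i, Real.exp (-2 * t₀ * α i) * ‖p i - q i‖ ^ 2) = 1)
    (t₁ t₂ : ℝ) (h : t₀ ≤ t₁ ∨ t₀ ≤ t₂) :
    |t₁ - t₂| ≤ gdist r n α (p, t₁) (q, t₂) ∧
      gdist r n α (p, t₁) (q, t₂) ≤ |t₁ - t₂| + 1 := by
  set m := max t₁ t₂ with hmdef
  have hm1 : t₁ ≤ m := le_max_left _ _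
  have hm2 : t₂ ≤ m := le_max_right _ _
  have hm0 : t₀ ≤ m := h.elim (fun hh => hh.trans hm1) (fun hh => hh.trans hm2)
  set H := Real.sqrt (∑ i, Real.exp (-2*m*α i) * ‖p i - q i‖^2) with hHdef
  have hH0 : 0 ≤ H := Real.sqrt_nonneg _
  have hH1 : H ≤ 1 := by
    have hsum : (∑ i, Real.exp (-2*m*α i) * ‖p i - q i‖^2) ≤ 1 := by
      rw [← ht₀]
      apply Finset.sum_le_sum
      intro i _
      apply mul_le_mul_of_nonneg_right _ (by positivity)
      exact Real.exp_le_exp.2 (by nlinarith [hα i])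
    calc H ≤ Real.sqrt 1 := Real.sqrt_le_sqrt hsum
      _ = 1 := Real.sqrt_one
  have hmem : (m - t₁) + H + (m - t₂) ∈ {L : ℝ | ∃ c v,
      c 0 = ((p, t₁) : (∀ i, EuclideanSpace ℝ (Fin (n i))) × ℝ) ∧
      c 1 = (q, t₂) ∧
      (∀ s ∈ Set.Icc (0:ℝ) 1, HasDerivAt c (v s) s) ∧ Continuous v ∧
      L = pathLength r n α c v} :=
    ⟨pc r n p q t₁ t₂ m, pv r n p q t₁ t₂ m, pc_zero r n p q t₁ t₂ m,
      pc_one r n p q t₁ t₂ m, fun s _ => pc_hasDerivAt r n p q t₁ t₂ m s,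
      pv_continuous r n p q t₁ t₂ m,
      (pathLength_pc r n α p q t₁ t₂ m hm1 hm2).symm⟩
  have hbdd : BddBelow {L : ℝ | ∃ c v,
      c 0 = ((p, t₁) : (∀ i, EuclideanSpace ℝ (Fin (n i))) × ℝ) ∧
      c 1 = (q, t₂) ∧
      (∀ s ∈ Set.Icc (0:ℝ) 1, HasDerivAt c (v s) s) ∧ Continuous v ∧
      L = pathLength r n α c v} := by
    refine ⟨0, fun L hL => ?_⟩
    obtain ⟨c, v, _, _, _, _, hLe⟩ := hL
    rw [hLe]; exact pathLength_nonneg r n α c v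
  constructor
  · unfold gdist
    apply le_csInf ⟨_, hmem⟩
    rintro b ⟨c, v, hc0, hc1, hc, hv, rfl⟩
    have hge := pathLength_ge r n α c v hc hv
    rw [hc0, hc1] at hge
    simpa [abs_sub_comm] using hge
  · unfold gdist
    refine le_trans (csInf_le hbdd hmem) ?_
    have habs : (m - t₁) + (m - t₂) = |t₁ - t₂| := by
      rcases le_total t₁ t₂ with h' | h'
      · rw [abs_of_nonpos (by linarith), hmdef, max_eq_right h']; ring
      · rw [abs_of_nonneg (by linarith), hmdef, max_eq_left h']; ring
    linarith
end

section
/- Let (X,d) be an unbounded metric space, p ∈ X, and define s_p on S_p(X) = X ∪ {∞} by s_p(x,y) = d(x,y)/[(1+d(x,p))(1+d(y,p))] for x,y ∈ X, s_p(x,∞) = 1/(1+d(x,p)), s_p(∞,∞) = 0. Then s_p is a quasimetric with relaxed triangle constant at most 2: s_p(x,z) ≤ 2(s_p(x,y) + s_p(y,z)) for all x, y, z ∈ S_p(X). -/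
/-- The sphericalization distance function `s_p` on `S_p(X) = X ∪ {∞}`
(modeled by `Option X`, with `∞ = none`). -/
noncomputable def sp {X : Type*} [MetricSpace X] (p : X) :
    Option X → Option X → ℝ
  | some x, some y => dist x y / ((1 + dist x p) * (1 + dist y p))
  | some x, none => 1 / (1 + dist x p)
  | none, some y => 1 / (1 + dist y p)
  | none, none => 0

lemma core_ineq (A B C r s t : ℝ) (hr : 0 ≤ r) (hs : 0 ≤ s)
    (h1 : t ≤ r + s) (h2 : t ≤ A + C) (h3 : B ≤ A + r) (h4 : B ≤ C + s)
    (h5 : A - C ≤ t) (h6 : C - A ≤ t) (h9 : r ≤ A + B) (h10 : s ≤ B + C) :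
    t * (1 + B) ≤ 2 * (r * (1 + C) + s * (1 + A)) := by
  nlinarith [sq_nonneg ((A + B - r) - (B + C - s)),
    mul_nonneg (sub_nonneg.2 h3) (sub_nonneg.2 h5),
    mul_nonneg (sub_nonneg.2 h1) (sub_nonneg.2 h10),
    mul_nonneg (sub_nonneg.2 h1) (sub_nonneg.2 h9),
    mul_nonneg (sub_nonneg.2 h2) (sub_nonneg.2 h5),
    mul_nonneg (sub_nonneg.2 h4) (sub_nonneg.2 h6),
    mul_nonneg (sub_nonneg.2 h2) (sub_nonneg.2 h6),
    mul_nonneg (sub_nonneg.2 h1) (sub_nonneg.2 h2),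
    mul_nonneg hs (sub_nonneg.2 h3),
    mul_nonneg hr (sub_nonneg.2 h4)]

lemma sp_nonneg {X : Type*} [MetricSpace X] (p : X) (x y : Option X) :
    0 ≤ sp p x y := by
  match x, y with
  | some a, some b => simp only [sp]; positivity
  | some a, none => simp only [sp]; positivity
  | none, some b => simp only [sp]; positivity
  | none, none => simp only [sp]; exact le_refl 0

/-- For an unbounded metric space `(X,d)` and `p ∈ X`, the sphericalization
function `s_p` on `S_p(X) = X ∪ {∞}` is a quasimetric with relaxed triangle
constant at most `2`: `s_p(x,z) ≤ 2 (s_p(x,y) + s_p(y,z))`. -/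
theorem stmt_19 {X : Type*} [MetricSpace X] (p : X)
    (hunbdd : ∀ R : ℝ, ∃ x : X, R ≤ dist x p) :
    ∀ x y z : Option X, sp p x z ≤ 2 * (sp p x y + sp p y z) := by
  have pos : ∀ q : X, (0:ℝ) < 1 + dist q p := fun q => by positivity
  intro x y z
  match x, y, z with
  | none, y, none =>
    have h0 : sp p (none : Option X) none = 0 := rfl
    rw [h0]
    linarith [sp_nonneg p (none : Option X) y, sp_nonneg p y (none : Option X)]
  | some a, none, none =>
    simp only [sp]
    have := pos a
    linarith [one_div_nonneg.2 (le_of_lt (pos a))]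
  | some a, some b, none =>
    simp only [sp]
    have hA := pos a; have hB := pos b
    rw [div_add_div _ _ (by positivity) (ne_of_gt hB), ← mul_div_assoc,
      div_le_div_iff₀ hA (by positivity)]
    have h3 : dist b p ≤ dist a p + dist a b := by
      have := dist_triangle b a p; rw [dist_comm b a] at this; linarith
    have key : 1 + dist b p ≤ 2 * (dist a b + (1 + dist a p)) := by linarith [dist_nonneg (x := a) (y := b)]
    have hmul := mul_le_mul_of_nonneg_right key
      (by positivity : (0:ℝ) ≤ (1 + dist a p) * (1 + dist b p))
    nlinarith [hmul]
  | none, none, some c =>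
    simp only [sp]
    have := pos c
    linarith [one_div_nonneg.2 (le_of_lt (pos c))]
  | none, some b, some c =>
    simp only [sp]
    have hB := pos b; have hC := pos c
    rw [div_add_div _ _ (ne_of_gt hB) (by positivity), ← mul_div_assoc,
      div_le_div_iff₀ hC (by positivity)]
    have h3 : dist b p ≤ dist c p + dist b c := by
      have := dist_triangle b c p; linarith
    have key : 1 + dist b p ≤ 2 * ((1 + dist c p) + dist b c) := by linarith [dist_nonneg (x := b) (y := c)]
    have hmul := mul_le_mul_of_nonneg_right key
      (by positivity : (0:ℝ) ≤ (1 + dist b p) * (1 + dist c p))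
    nlinarith [hmul]
  | some a, none, some c =>
    simp only [sp]
    have hA := pos a; have hC := pos c
    rw [div_add_div _ _ (ne_of_gt hA) (ne_of_gt hC), ← mul_div_assoc,
      div_le_div_iff₀ (by positivity : (0:ℝ) < (1 + dist a p) * (1 + dist c p)) (by positivity)]
    have ht : dist a c ≤ dist a p + dist c p := by
      have := dist_triangle a p c; rw [dist_comm p c] at this; linarith
    have key : dist a c ≤ 2 * ((1 + dist c p) + (1 + dist a p)) := by linarith [pos a, pos c]
    have hmul := mul_le_mul_of_nonneg_right key
      (by positivity : (0:ℝ) ≤ (1 + dist a p) * (1 + dist c p))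
    nlinarith [hmul]
  | some a, some b, some c =>
    simp only [sp]
    have hA := pos a; have hB := pos b; have hC := pos c
    rw [div_add_div _ _ (by positivity) (by positivity), ← mul_div_assoc,
      div_le_div_iff₀ (by positivity : (0:ℝ) < (1 + dist a p) * (1 + dist c p)) (by positivity)]
    have h1 : dist a c ≤ dist a b + dist b c := dist_triangle a b c
    have h2 : dist a c ≤ dist a p + dist c p := by
      have := dist_triangle a p c; rw [dist_comm p c] at this; linarith
    have h3 : dist b p ≤ dist a p + dist a b := by
      have := dist_triangle b a p; rw [dist_comm b a] at this; linarith
    have h4 : dist b p ≤ dist c p + dist b c := by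
      have := dist_triangle b c p; linarith
    have h5 : dist a p - dist c p ≤ dist a c := by
      have := dist_triangle a c p; linarith
    have h6 : dist c p - dist a p ≤ dist a c := by
      have := dist_triangle c a p; rw [dist_comm c a] at this; linarith
    have h9 : dist a b ≤ dist a p + dist b p := by
      have := dist_triangle a p b; rw [dist_comm p b] at this; linarith
    have h10 : dist b c ≤ dist b p + dist c p := by
      have := dist_triangle b p c; rw [dist_comm p c] at this; linarith
    have key := core_ineq (dist a p) (dist b p) (dist c p) (dist a b) (dist b c) (dist a c)
      dist_nonneg dist_nonneg h1 h2 h3 h4 h5 h6 h9 h10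
    have hmul := mul_le_mul_of_nonneg_right key
      (by positivity : (0:ℝ) ≤ (1 + dist a p) * (1 + dist b p) * (1 + dist c p))
    nlinarith [hmul]
end
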